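/- Suppose |H(x₁,x₂)| ≤ C x₁ [(x₁²+x₂²)^{−1} + (x₁²+x₂²)^{−3/4}] for x₁ > 0. Then for all x₁ > 0 and a > 0, ∫₀^a |H(x₁,s)| ds ≤ C'' (1+x₁)^{1/2} · min(1, a/x₁), where C'' depends only on C. -/

import Mathlib

open Set MeasureTheory intervalIntegral

lemma sq_rpow_neg34 {x : ℝ} (hx : 0 < x) :
    (x ^ 2 : ℝ) ^ (-(3:ℝ)/4) = Real.sqrt x / x ^ 2 := by
  have h1 : (x ^ 2 : ℝ) ^ (-(3:ℝ)/4) = x ^ (-(3:ℝ)/2) := by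
    rw [← Real.rpow_natCast x 2, ← Real.rpow_mul hx.le]
    norm_num
  rw [h1, Real.sqrt_eq_rpow, eq_div_iff (by positivity), ← Real.rpow_natCast x 2,
    ← Real.rpow_add hx]
  norm_num

lemma sqrt_add_le {x : ℝ} (hx : 0 ≤ x) : 1 + Real.sqrt x ≤ 2 * Real.sqrt (1 + x) := by
  have h1 : (1:ℝ) ≤ Real.sqrt (1 + x) := by
    nlinarith [Real.sq_sqrt (show (0:ℝ) ≤ 1 + x by linarith), Real.sqrt_nonneg (1 + x)]
  have h2 : Real.sqrt x ≤ Real.sqrt (1 + x) := Real.sqrt_le_sqrt (by linarith)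
  linarith

/-- If `|H(x₁,x₂)| ≤ C x₁ [(x₁²+x₂²)⁻¹ + (x₁²+x₂²)^{−3/4}]` for `x₁ > 0`, then
`∫₀^a |H(x₁,s)| ds ≤ C'' (1+x₁)^{1/2} min(1, a/x₁)`, with `C''` depending only on `C`. -/
theorem stmt_7 (C : ℝ) (hC : 0 < C) :
    ∃ C'' > (0:ℝ), ∀ H : ℝ → ℝ → ℂ,
      (∀ x₁ x₂ : ℝ, 0 < x₁ →
        ‖H x₁ x₂‖ ≤ C * x₁ * ((x₁ ^ 2 + x₂ ^ 2)⁻¹ + (x₁ ^ 2 + x₂ ^ 2) ^ (-(3:ℝ)/4))) →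
      ∀ x₁ : ℝ, 0 < x₁ → ∀ a : ℝ, 0 < a →
        (∫ s in Ioc (0:ℝ) a, ‖H x₁ s‖) ≤
          C'' * Real.sqrt (1 + x₁) * min 1 (a / x₁) := by
  refine ⟨6 * C, by positivity, ?_⟩
  intro H hH x₁ hx₁ a ha
  set g : ℝ → ℝ := fun s => C * x₁ * ((x₁ ^ 2 + s ^ 2)⁻¹ + (x₁ ^ 2 + s ^ 2) ^ (-(3:ℝ)/4))
    with hgdef
  have hbase : ∀ s : ℝ, 0 < x₁ ^ 2 + s ^ 2 := fun s => by positivity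
  have hgc : Continuous g := by
    apply continuous_const.mul
    apply Continuous.add
    · exact (continuous_const.add (continuous_id.pow 2)).inv₀ fun s => (hbase s).ne'
    · exact (continuous_const.add (continuous_id.pow 2)).rpow_const
        fun s => Or.inl (hbase s).ne'
  have hgint : ∀ b c : ℝ, IntegrableOn g (Ioc b c) := fun b c => hgc.integrableOn_Ioc
  have hsx : 0 < Real.sqrt x₁ := Real.sqrt_pos.mpr hx₁
  have hsx2 : Real.sqrt x₁ ^ 2 = x₁ := Real.sq_sqrt hx₁.le
  have hS : 0 < Real.sqrt (1 + x₁) := Real.sqrt_pos.mpr (by linarith)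
  -- first step : bound by the integral of g
  have h1 : (∫ s in Ioc (0:ℝ) a, ‖H x₁ s‖) ≤ ∫ s in Ioc (0:ℝ) a, g s := by
    refine integral_mono_of_nonneg (Filter.Eventually.of_forall fun s => norm_nonneg _)
      (hgint 0 a) (Filter.Eventually.of_forall fun s => hH x₁ s hx₁)
  -- constant bound for g
  set B : ℝ := C * (1 + Real.sqrt x₁) / x₁ with hBdef
  have hgB : ∀ s : ℝ, g s ≤ B := by
    intro s
    have e1 : (x₁ ^ 2 + s ^ 2)⁻¹ ≤ (x₁ ^ 2)⁻¹ := by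
      apply inv_anti₀ (by positivity); nlinarith [sq_nonneg s]
    have e2 : (x₁ ^ 2 + s ^ 2) ^ (-(3:ℝ)/4) ≤ (x₁ ^ 2) ^ (-(3:ℝ)/4) :=
      Real.rpow_le_rpow_of_nonpos (by positivity) (by nlinarith [sq_nonneg s]) (by norm_num)
    have e3 : g s ≤ C * x₁ * ((x₁ ^ 2)⁻¹ + (x₁ ^ 2) ^ (-(3:ℝ)/4)) := by
      have := mul_le_mul_of_nonneg_left (add_le_add e1 e2) (by positivity : (0:ℝ) ≤ C * x₁)
      simpa [hgdef] using this
    refine e3.trans_eq ?_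
    rw [sq_rpow_neg34 hx₁, hBdef]
    field_simp
  have hIb : ∀ b : ℝ, 0 < b → (∫ s in Ioc (0:ℝ) b, g s) ≤ b * B := by
    intro b hb
    calc (∫ s in Ioc (0:ℝ) b, g s) ≤ ∫ _s in Ioc (0:ℝ) b, B :=
          setIntegral_mono_on (hgint 0 b) (integrableOn_const (by simp))
            measurableSet_Ioc (fun s _ => hgB s)
      _ = b * B := by
          simp [Real.volume_Ioc, ENNReal.toReal_ofReal hb.le, hb.le]
  rcases le_or_gt a x₁ with hax | hax
  · -- small a : use the constant bound
    have hmin : min 1 (a / x₁) = a / x₁ :=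
      min_eq_right ((div_le_one hx₁).mpr hax)
    have h2 : (∫ s in Ioc (0:ℝ) a, g s) ≤ a * B := hIb a ha
    have h3 : a * B ≤ 6 * C * Real.sqrt (1 + x₁) * (a / x₁) := by
      rw [hBdef, show a * (C * (1 + Real.sqrt x₁) / x₁) = a * C * (1 + Real.sqrt x₁) / x₁
          by ring,
        show 6 * C * Real.sqrt (1 + x₁) * (a / x₁) = 6 * C * Real.sqrt (1 + x₁) * a / x₁
          by ring,
        div_le_div_iff_of_pos_right hx₁]
      have hs := sqrt_add_le hx₁.le
      nlinarith [mul_pos hC ha, mul_pos (mul_pos hC ha) hS]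
    rw [hmin]
    linarith
  · -- large a : split at x₁
    have hmin : min 1 (a / x₁) = 1 := min_eq_left ((le_div_iff₀ hx₁).mpr (by linarith))
    have hsplit : (∫ s in Ioc (0:ℝ) a, g s)
        = (∫ s in Ioc (0:ℝ) x₁, g s) + ∫ s in Ioc x₁ a, g s := by
      rw [← setIntegral_union (Set.Ioc_disjoint_Ioc_of_le le_rfl) measurableSet_Ioc (hgint 0 x₁)
        (hgint x₁ a), Set.Ioc_union_Ioc_eq_Ioc hx₁.le hax.le]
    have hI1 : (∫ s in Ioc (0:ℝ) x₁, g s) ≤ C * (1 + Real.sqrt x₁) := by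
      have := hIb x₁ hx₁
      rw [hBdef] at this
      calc (∫ s in Ioc (0:ℝ) x₁, g s) ≤ x₁ * (C * (1 + Real.sqrt x₁) / x₁) := this
        _ = C * (1 + Real.sqrt x₁) := by field_simp
    -- second piece
    have hI2 : (∫ s in Ioc x₁ a, g s) ≤ C * (1 + 2 * Real.sqrt x₁) := by
      have hg2 : ∀ s ∈ Set.Icc x₁ a, g s ≤ C * x₁ * (s ^ (-2:ℝ) + s ^ (-(3:ℝ)/2)) := by
        intro s hs
        have hspos : 0 < s := lt_of_lt_of_le hx₁ hs.1
        have e1 : (x₁ ^ 2 + s ^ 2)⁻¹ ≤ s ^ (-2:ℝ) := by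
          rw [show s ^ (-2:ℝ) = (s ^ 2)⁻¹ by
            rw [show (-2:ℝ) = ((-2:ℤ):ℝ) by norm_num, Real.rpow_intCast]
            rw [zpow_neg]
            norm_cast]
          apply inv_anti₀ (by positivity); nlinarith [sq_nonneg x₁]
        have e2 : (x₁ ^ 2 + s ^ 2) ^ (-(3:ℝ)/4) ≤ s ^ (-(3:ℝ)/2) := by
          have : (x₁ ^ 2 + s ^ 2) ^ (-(3:ℝ)/4) ≤ (s ^ 2) ^ (-(3:ℝ)/4) :=
            Real.rpow_le_rpow_of_nonpos (by positivity) (by nlinarith [sq_nonneg x₁])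
              (by norm_num)
          refine this.trans_eq ?_
          rw [← Real.rpow_natCast s 2, ← Real.rpow_mul hspos.le]
          norm_num
        have := mul_le_mul_of_nonneg_left (add_le_add e1 e2)
          (by positivity : (0:ℝ) ≤ C * x₁)
        simpa [hgdef] using this
      have hnn : (0:ℝ) ∉ Set.uIcc x₁ a := by
        rw [Set.uIcc_of_le hax.le]
        intro h
        exact absurd h.1 (not_le.mpr hx₁)
      have hint2 : IntervalIntegrable (fun s => C * x₁ * (s ^ (-2:ℝ) + s ^ (-(3:ℝ)/2)))
          MeasureTheory.volume x₁ a := by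
        apply IntervalIntegrable.const_mul
        exact (intervalIntegrable_rpow (Or.inr hnn)).add (intervalIntegrable_rpow (Or.inr hnn))
      have hmono : (∫ s in x₁..a, g s) ≤ ∫ s in x₁..a, C * x₁ * (s ^ (-2:ℝ) + s ^ (-(3:ℝ)/2)) :=
        intervalIntegral.integral_mono_on hax.le (hgc.intervalIntegrable x₁ a) hint2 hg2
      have hval : (∫ s in x₁..a, C * x₁ * (s ^ (-2:ℝ) + s ^ (-(3:ℝ)/2)))
          ≤ C * (1 + 2 * Real.sqrt x₁) := by
        rw [intervalIntegral.integral_const_mul, intervalIntegral.integral_add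
          (intervalIntegrable_rpow (Or.inr hnn)) (intervalIntegrable_rpow (Or.inr hnn)),
          integral_rpow (Or.inr ⟨by norm_num, hnn⟩), integral_rpow (Or.inr ⟨by norm_num, hnn⟩),
          show (-2 + 1 : ℝ) = -1 by norm_num,
          show (-(3:ℝ)/2 + 1 : ℝ) = -(1/2) by norm_num]
        have hx1i : x₁ ^ (-1 : ℝ) = x₁⁻¹ := Real.rpow_neg_one x₁
        have hai : (0:ℝ) ≤ a ^ (-1 : ℝ) := Real.rpow_nonneg ha.le _
        have hx1h : x₁ ^ (-(1/2) : ℝ) = (Real.sqrt x₁)⁻¹ := by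
          rw [Real.rpow_neg hx₁.le, ← Real.sqrt_eq_rpow]
        have hah : (0:ℝ) ≤ a ^ (-(1/2) : ℝ) := Real.rpow_nonneg ha.le _
        have key : (a ^ (-1 : ℝ) - x₁ ^ (-1 : ℝ)) / (-1)
            + (a ^ (-(1/2) : ℝ) - x₁ ^ (-(1/2) : ℝ)) / (-(1/2))
            ≤ x₁⁻¹ + 2 * (Real.sqrt x₁)⁻¹ := by
          rw [hx1i, hx1h]
          have h2 : (a ^ (-1 : ℝ) - x₁⁻¹) / (-1) ≤ x₁⁻¹ := by
            rw [div_le_iff_of_neg (by norm_num : (-1:ℝ) < 0)]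
            linarith
          have h3 : (a ^ (-(1/2) : ℝ) - (Real.sqrt x₁)⁻¹) / (-(1/2))
              ≤ 2 * (Real.sqrt x₁)⁻¹ := by
            rw [div_le_iff_of_neg (by norm_num : (-(1/2):ℝ) < 0)]
            linarith
          linarith
        have hxs : x₁ * (Real.sqrt x₁)⁻¹ = Real.sqrt x₁ := by
          field_simp
          exact hsx2.symm
        calc C * x₁ * ((a ^ (-1 : ℝ) - x₁ ^ (-1 : ℝ)) / (-1)
              + (a ^ (-(1/2) : ℝ) - x₁ ^ (-(1/2) : ℝ)) / (-(1/2)))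
            ≤ C * x₁ * (x₁⁻¹ + 2 * (Real.sqrt x₁)⁻¹) :=
              mul_le_mul_of_nonneg_left key (by positivity)
          _ = C * (x₁ * x₁⁻¹) + 2 * C * (x₁ * (Real.sqrt x₁)⁻¹) := by ring
          _ = C * (1 + 2 * Real.sqrt x₁) := by
              rw [mul_inv_cancel₀ hx₁.ne', hxs]; ring
      have heq : (∫ s in Ioc x₁ a, g s) = ∫ s in x₁..a, g s :=
        (intervalIntegral.integral_of_le hax.le).symm
      rw [heq]
      exact hmono.trans hval
    have hsum : (∫ s in Ioc (0:ℝ) a, g s) ≤ C * (2 + 3 * Real.sqrt x₁) := by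
      rw [hsplit]; linarith
    have hfin : C * (2 + 3 * Real.sqrt x₁) ≤ 6 * C * Real.sqrt (1 + x₁) * 1 := by
      have hs := sqrt_add_le hx₁.le
      nlinarith
    rw [hmin]
    linarith
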